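/- Let K be a field of characteristic 0 and let t ∈ K satisfy t² = 6t + 18. Then the Weierstrass curves C_{9,1}(t,1), C_{9,2}(t,1), C_{9,3}(t,1) all have nonzero discriminant, the j-invariant of C_{9,2}(t,1) equals 1728, and the j-invariants of C_{9,1}(t,1) and C_{9,3}(t,1) are both equal to 14776832·t + 32440512. -/
import Mathlib


noncomputable section

/-- The curve `C_{9,1}(t,d)`. -/
def C91 {K : Type*} [Field K] (t d : K) : WeierstrassCurve K :=
  { a₁ := 0, a₂ := 0, a₃ := 0,
    a₄ := -3 * d ^ 2 * (t + 6) * (t ^ 3 + 234 * t ^ 2 + 756 * t + 2160),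
    a₆ := -2 * d ^ 3 * (t ^ 6 - 504 * t ^ 5 - 16632 * t ^ 4 - 123012 * t ^ 3 - 517104 * t ^ 2 - 1143072 * t - 1475496) }

/-- The curve `C_{9,2}(t,d)`. -/
def C92 {K : Type*} [Field K] (t d : K) : WeierstrassCurve K :=
  { a₁ := 0, a₂ := 0, a₃ := 0,
    a₄ := -243 * d ^ 2 * t * (t + 6) * (t ^ 2 - 6 * t + 36),
    a₆ := -1458 * d ^ 3 * (t ^ 2 - 6 * t - 18) * (t ^ 4 + 6 * t ^ 3 + 54 * t ^ 2 - 108 * t + 324) }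

/-- The curve `C_{9,3}(t,d)`. -/
def C93 {K : Type*} [Field K] (t d : K) : WeierstrassCurve K :=
  { a₁ := 0, a₂ := 0, a₃ := 0,
    a₄ := -19683 * d ^ 2 * t * (t ^ 3 - 24),
    a₆ := -1062882 * d ^ 3 * (t ^ 6 - 36 * t ^ 3 + 216) }

theorem stmt11 {K : Type*} [Field K] [CharZero K] (t : K) (ht : t ^ 2 = 6 * t + 18) :
    (C91 t 1).Δ ≠ 0 ∧ (C92 t 1).Δ ≠ 0 ∧ (C93 t 1).Δ ≠ 0 ∧
    (C92 t 1).c₄ ^ 3 / (C92 t 1).Δ = 1728 ∧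
    (C91 t 1).c₄ ^ 3 / (C91 t 1).Δ = 14776832 * t + 32440512 ∧
    (C93 t 1).c₄ ^ 3 / (C93 t 1).Δ = 14776832 * t + 32440512 := by
  have hD1 : (C91 t 1).Δ = (128536820158464 : K) + (85691213438976 : K) * t := by
    simp only [C91, WeierstrassCurve.Δ, WeierstrassCurve.b₂, WeierstrassCurve.b₄, WeierstrassCurve.b₆, WeierstrassCurve.b₈]
    linear_combination ((7170321014784 : K) + (2292151799808 : K) * t + (-274274574336 : K) * t ^ 2 + (156728328192 : K) * t ^ 3 + (-39182082048 : K) * t ^ 4 + (11609505792 : K) * t ^ 5 + (-2660511744 : K) * t ^ 6 + (483729408 : K) * t ^ 7 + (-53747712 : K) * t ^ 8 + (2985984 : K) * t ^ 9) * ht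
  have hC1 : (C91 t 1).c₄ = (11337408 : K) + (4758912 : K) * t := by
    simp only [C91, WeierstrassCurve.c₄, WeierstrassCurve.b₂, WeierstrassCurve.b₄]
    linear_combination ((526176 : K) + (35424 : K) * t + (144 : K) * t ^ 2) * ht
  have hne1 : ((128536820158464 : K) + (85691213438976 : K) * t) ≠ 0 := by
    intro h
    exact one_ne_zero (α := K) (by linear_combination ((-4/27 : K)) * ht + ((-5/385610460475392 : K) + (1/578415690713088 : K) * t) * h)
  have hj1 : (C91 t 1).c₄ ^ 3 / (C91 t 1).Δ = (32440512 : K) + (14776832 : K) * t := by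
    rw [hC1, hD1, div_eq_iff hne1]
    linear_combination ((150695882424075681792 : K) + (107776238496176406528 : K) * t) * ht
  have hD2 : (C92 t 1).Δ = (48069814392401891328 : K) + (21926582003551739904 : K) * t := by
    simp only [C92, WeierstrassCurve.Δ, WeierstrassCurve.b₂, WeierstrassCurve.b₄, WeierstrassCurve.b₆, WeierstrassCurve.b₈]
    linear_combination ((2672280491094466560 : K) + (327383280943607808 : K) * t + (39332266968489984 : K) * t ^ 2 + (4884399166021632 : K) * t ^ 3 + (556992887353344 : K) * t ^ 4 + (85691213438976 : K) * t ^ 5 + (9521245937664 : K) * t ^ 6 + (1586874322944 : K) * t ^ 7) * ht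
  have hC2 : (C92 t 1).c₄ = (11337408 : K) + (7558272 : K) * t := by
    simp only [C92, WeierstrassCurve.c₄, WeierstrassCurve.b₂, WeierstrassCurve.b₄]
    linear_combination ((629856 : K) + (69984 : K) * t + (11664 : K) * t ^ 2) * ht
  have hne2 : ((48069814392401891328 : K) + (21926582003551739904 : K) * t) ≠ 0 := by
    intro h
    exact one_ne_zero (α := K) (by linear_combination ((-676/27 : K)) * ht + ((-71/7589970693537140736 : K) + (13/11384956040305711104 : K) * t) * h)
  have hj2 : (C92 t 1).c₄ ^ 3 / (C92 t 1).Δ = (1728 : K) := by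
    rw [hC2, hD2, div_eq_iff hne2]
    linear_combination ((4533742494272852066304 : K) + (431784999454557339648 : K) * t) * ht
  have hD3 : (C93 t 1).Δ = (68309736241834266624 : K) + (45539824161222844416 : K) * t := by
    simp only [C93, WeierstrassCurve.Δ, WeierstrassCurve.b₂, WeierstrassCurve.b₄, WeierstrassCurve.b₆, WeierstrassCurve.b₈]
    linear_combination ((5059980462358093824 : K) + (843330077059682304 : K) * t) * ht
  have hC3 : (C93 t 1).c₄ = (918330048 : K) + (385471872 : K) * t := by
    simp only [C93, WeierstrassCurve.c₄, WeierstrassCurve.b₂, WeierstrassCurve.b₄]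
    linear_combination ((51018336 : K) + (5668704 : K) * t + (944784 : K) * t ^ 2) * ht
  have hne3 : ((68309736241834266624 : K) + (45539824161222844416 : K) * t) ≠ 0 := by
    intro h
    exact one_ne_zero (α := K) (by linear_combination ((-4/27 : K)) * ht + ((-5/204929208725502799872 : K) + (1/307393813088254199808 : K) * t) * h)
  have hj3 : (C93 t 1).c₄ ^ 3 / (C93 t 1).Δ = (32440512 : K) + (14776832 : K) * t := by
    rw [hC3, hD3, div_eq_iff hne3]
    linear_combination ((80085970451333204407222272 : K) + (57276711962646485661646848 : K) * t) * ht

  refine ⟨?_, ?_, ?_, ?_, ?_, ?_⟩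
  · rw [hD1]; exact hne1
  · rw [hD2]; exact hne2
  · rw [hD3]; exact hne3
  · rw [hj2]
  · rw [hj1]; ring
  · rw [hj3]; ring
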